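/- Let G ∈ H¹(T) be non-null with inner-outer factorization G = G₀·u, where G₀ is outer and u is inner. Suppose g ≥ 0 a.e. on T with G = conj(z φ)·g for some φ ∈ L^∞(T), and let ψ := Re u. Then conj(zφ)·g·(1+ψ) = (1/2)·G₀·(1+u)² and conj(zφ)·g·(1-ψ) = -(1/2)·G₀·(1-u)² a.e. on T; in particular both products belong to H¹(T) and are outer multiples of squares of H^∞ functions when u is nonconstant. -/

import Mathlib

open MeasureTheory Complex Filter Set Metric
open scoped Real ENNReal ComplexConjugate

noncomputable section

instance : Fact (0 < 2 * Real.pi) := ⟨by positivity⟩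

/-- The unit circle, realized as `ℝ / 2πℤ`. -/
abbrev 𝕋 := AddCircle (2 * Real.pi)

/-- The normalized Lebesgue (Haar) measure on the circle. -/
abbrev m : Measure 𝕋 := AddCircle.haarAddCircle

/-- The identity coordinate `z = e^{iθ}` on the circle. -/
def bz : 𝕋 → ℂ := fun x => fourier 1 x

/-- `F` belongs to the Hardy class `H^p` of the open unit disk:
holomorphic with uniformly bounded `p`-means on circles (bounded, if `p = ∞`). -/
def HpDisk (p : ℝ≥0∞) (F : ℂ → ℂ) : Prop :=
  DifferentiableOn ℂ F (ball (0:ℂ) 1) ∧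
    if p = ∞ then ∃ C : ℝ, ∀ w ∈ ball (0:ℂ) 1, ‖F w‖ ≤ C
    else ∃ C : ℝ, ∀ r ∈ Ico (0:ℝ) 1, (∫ x : 𝕋, ‖F ((r : ℂ) * bz x)‖ ^ p.toReal ∂m) ≤ C

/-- `f : 𝕋 → ℂ` is the a.e. radial boundary function of `F : ℂ → ℂ`. -/
def IsBoundary (F : ℂ → ℂ) (f : 𝕋 → ℂ) : Prop :=
  ∀ᵐ x ∂m, Tendsto (fun r : ℝ => F ((r : ℂ) * bz x)) (nhdsWithin 1 (Iio 1)) (nhds (f x))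

/-- `f` belongs to the Hardy space `H^p(𝕋)`: it is the boundary function of some
disk function of class `H^p`. -/
def MemHp (p : ℝ≥0∞) (f : 𝕋 → ℂ) : Prop :=
  ∃ F : ℂ → ℂ, HpDisk p F ∧ IsBoundary F f

/-- `f` belongs to the kernel `K_p(φ)` of the Toeplitz operator `T_φ`:
`f ∈ H^p` and the companion function `conj (z φ f)` is in `H^p`. -/
def MemKp (p : ℝ≥0∞) (φ f : 𝕋 → ℂ) : Prop :=
  MemHp p f ∧ MemHp p (fun x => conj (bz x * φ x * f x))

/-- The set `V_φ = {|f|² : f ∈ K₂(φ), 0 < ‖f‖₂ ≤ 1}` (of a.e.-defined functions). -/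
def Vphi (φ : 𝕋 → ℂ) : Set (𝕋 → ℝ) :=
  {g | ∃ f : 𝕋 → ℂ, MemKp 2 φ f ∧ 0 < eLpNorm f 2 m ∧ eLpNorm f 2 m ≤ 1 ∧
        ∀ᵐ x ∂m, g x = ‖f x‖ ^ 2}

/-- `g` is an extreme point of `V_φ` (in the a.e. sense). -/
def IsExtremeVphi (φ : 𝕋 → ℂ) (g : 𝕋 → ℝ) : Prop :=
  g ∈ Vphi φ ∧ ∀ g₁ ∈ Vphi φ, ∀ g₂ ∈ Vphi φ,
    (∀ᵐ x ∂m, g x = (g₁ x + g₂ x) / 2) → (g₁ =ᵐ[m] g ∧ g₂ =ᵐ[m] g)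

/-- The outer function on the disk with boundary modulus `w`, given by the
Herglotz-type integral formula. -/
def OuterOf (w : 𝕋 → ℝ) : ℂ → ℂ :=
  fun ζ => Complex.exp (∫ x : 𝕋, ((bz x + ζ) / (bz x - ζ)) * (Real.log (w x) : ℂ) ∂m)

/-- `F : ℂ → ℂ` is an outer function: a unimodular constant times `OuterOf w`
for some weight `w ≥ 0` with `log w ∈ L¹`. -/
def IsOuter (F : ℂ → ℂ) : Prop :=
  ∃ (c : ℂ) (w : 𝕋 → ℝ), ‖c‖ = 1 ∧ (∀ᵐ x ∂m, 0 ≤ w x) ∧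
    Integrable (fun x => Real.log (w x)) m ∧
    ∀ ζ ∈ ball (0:ℂ) 1, F ζ = c * OuterOf w ζ

/-- A boundary function `f ∈ H^p(𝕋)` is outer. -/
def IsOuterBnd (p : ℝ≥0∞) (f : 𝕋 → ℂ) : Prop :=
  ∃ F : ℂ → ℂ, HpDisk p F ∧ IsOuter F ∧ IsBoundary F f

/-- `F` is an inner function: holomorphic and bounded by `1` on the disk,
with unimodular boundary values a.e. -/
def IsInner (F : ℂ → ℂ) : Prop :=
  DifferentiableOn ℂ F (ball (0:ℂ) 1) ∧ (∀ w ∈ ball (0:ℂ) 1, ‖F w‖ ≤ 1) ∧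
    ∃ f : 𝕋 → ℂ, IsBoundary F f ∧ ∀ᵐ x ∂m, ‖f x‖ = 1

/-- The inner function `J` divides the inner function `I`. -/
def InnerDivides (J I : ℂ → ℂ) : Prop :=
  ∃ K : ℂ → ℂ, IsInner K ∧ ∀ ζ ∈ ball (0:ℂ) 1, I ζ = J ζ * K ζ

/-- `F` belongs to the Smirnov class `N⁺`: a quotient of an `H^∞` function by an
outer `H^∞` function. -/
def MemNplus (F : ℂ → ℂ) : Prop :=
  ∃ G H : ℂ → ℂ, HpDisk ∞ G ∧ HpDisk ∞ H ∧ IsOuter H ∧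
    ∀ ζ ∈ ball (0:ℂ) 1, F ζ * H ζ = G ζ

lemma bz_norm (x : 𝕋) : ‖bz x‖ = 1 := by
  rw [bz, fourier_apply]; exact Circle.norm_coe _

lemma mem_ball_of_r {r : ℝ} (hr : r ∈ Ico (0:ℝ) 1) (x : 𝕋) : (r : ℂ) * bz x ∈ ball (0:ℂ) 1 := by
  rw [mem_ball_zero_iff, norm_mul, bz_norm, mul_one, Complex.norm_real, Real.norm_eq_abs,
    _root_.abs_of_nonneg hr.1]
  exact hr.2

lemma cont_comp {H : ℂ → ℂ} (hH : DifferentiableOn ℂ H (ball (0:ℂ) 1)) {r : ℝ}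
    (hr : r ∈ Ico (0:ℝ) 1) : Continuous fun x : 𝕋 => H ((r : ℂ) * bz x) := by
  apply hH.continuousOn.comp_continuous
  · exact continuous_const.mul (map_continuous (fourier 1))
  · exact mem_ball_of_r hr

lemma cont_integrable {h : 𝕋 → ℝ} (hc : Continuous h) : Integrable h m :=
  hc.integrable_of_hasCompactSupport ((isClosed_tsupport _).isCompact)

lemma HpDisk_mul_sq (F V : ℂ → ℂ) (c : ℂ) (hF : HpDisk 1 F)
    (hV : DifferentiableOn ℂ V (ball (0:ℂ) 1)) (hVb : ∀ w ∈ ball (0:ℂ) 1, ‖V w‖ ≤ 2) :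
    HpDisk 1 (fun ζ => c * F ζ * V ζ ^ 2) := by
  obtain ⟨hFd, hFb⟩ := hF
  unfold HpDisk
  rw [if_neg (by norm_num)] at hFb
  rw [if_neg (by norm_num)]
  obtain ⟨C, hC⟩ := hFb
  refine ⟨((differentiableOn_const c).mul hFd).mul (hV.pow 2), 4 * ‖c‖ * C, fun r hr => ?_⟩
  have hCr := hC r hr
  simp only [ENNReal.toReal_one, Real.rpow_one] at hCr ⊢
  have hcontF := cont_comp hFd hr
  have hcontV := cont_comp hV hr
  have h1 : Integrable (fun x : 𝕋 => ‖c * F ((r:ℂ) * bz x) * V ((r:ℂ) * bz x) ^ 2‖) m :=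
    cont_integrable ((continuous_const.mul hcontF |>.mul (hcontV.pow 2)).norm)
  have h2 : Integrable (fun x : 𝕋 => 4 * ‖c‖ * ‖F ((r:ℂ) * bz x)‖) m :=
    cont_integrable (continuous_const.mul hcontF.norm)
  calc (∫ x : 𝕋, ‖c * F ((r:ℂ) * bz x) * V ((r:ℂ) * bz x) ^ 2‖ ∂m)
      ≤ ∫ x : 𝕋, 4 * ‖c‖ * ‖F ((r:ℂ) * bz x)‖ ∂m := by
        refine integral_mono h1 h2 fun x => ?_
        have hVx := hVb _ (mem_ball_of_r hr x)
        have hV4 : ‖V ((r:ℂ) * bz x)‖ * ‖V ((r:ℂ) * bz x)‖ ≤ 4 := by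
          nlinarith [norm_nonneg (V ((r:ℂ) * bz x))]
        rw [norm_mul, norm_mul, norm_pow]
        have hcF : (0:ℝ) ≤ ‖c‖ * ‖F ((r:ℂ) * bz x)‖ :=
          mul_nonneg (norm_nonneg _) (norm_nonneg _)
        nlinarith [hV4, hcF]
    _ ≤ 4 * ‖c‖ * C := by
        rw [integral_const_mul]
        exact mul_le_mul_of_nonneg_left hCr (by positivity)

/-- With `G = conj (z φ) · g = G₀ u` (inner-outer factorization,
at the boundary) and `ψ = Re u`, one has `conj (z φ) g (1+ψ) = ½ G₀ (1+u)²` and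
`conj (z φ) g (1-ψ) = -½ G₀ (1-u)²` a.e.; in particular both products are in `H¹`. -/
theorem stmt14 (φ : 𝕋 → ℂ) (hφ : MemLp φ ∞ m)
    (g : 𝕋 → ℝ) (hgpos : ∀ᵐ x ∂m, 0 ≤ g x)
    (G G₀ u : 𝕋 → ℂ)
    (hGdef : ∀ᵐ x ∂m, G x = conj (bz x * φ x) * (g x : ℂ))
    (hG : MemHp 1 G) (hG0 : ¬ G =ᵐ[m] 0)
    (hout : IsOuterBnd 1 G₀)
    (hinner : ∃ U : ℂ → ℂ, IsInner U ∧ IsBoundary U u)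
    (hfact : ∀ᵐ x ∂m, G x = G₀ x * u x) :
    (∀ᵐ x ∂m, conj (bz x * φ x) * ((g x : ℂ) * (1 + ((u x).re : ℂ))) =
        (1/2 : ℂ) * G₀ x * (1 + u x) ^ 2) ∧
    (∀ᵐ x ∂m, conj (bz x * φ x) * ((g x : ℂ) * (1 - ((u x).re : ℂ))) =
        -(1/2 : ℂ) * G₀ x * (1 - u x) ^ 2) ∧
    MemHp 1 (fun x => conj (bz x * φ x) * ((g x : ℂ) * (1 + ((u x).re : ℂ)))) ∧
    MemHp 1 (fun x => conj (bz x * φ x) * ((g x : ℂ) * (1 - ((u x).re : ℂ)))) := by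
  obtain ⟨U, ⟨hUdiff, hUbd, f, hUf, hf1⟩, hUu⟩ := hinner
  obtain ⟨F, hF, _, hFG₀⟩ := hout
  have hu1 : ∀ᵐ x ∂m, ‖u x‖ = 1 := by
    filter_upwards [hUu, hUf, hf1] with x h1 h2 h3
    rw [tendsto_nhds_unique h1 h2]; exact h3
  have heq1 : ∀ᵐ x ∂m, conj (bz x * φ x) * ((g x : ℂ) * (1 + ((u x).re : ℂ))) =
      (1/2 : ℂ) * G₀ x * (1 + u x) ^ 2 := by
    filter_upwards [hGdef, hfact, hu1] with x h1 h2 h3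
    have hv : u x * conj (u x) = 1 := by
      rw [Complex.mul_conj]
      norm_cast
      rw [Complex.normSq_eq_norm_sq, h3, one_pow]
    have hre : ((u x).re : ℂ) = (u x + conj (u x)) / 2 := by
      rw [Complex.add_conj]; push_cast; ring
    have hGx : conj (bz x * φ x) * (g x : ℂ) = G₀ x * u x := by rw [← h1, h2]
    calc conj (bz x * φ x) * ((g x : ℂ) * (1 + ((u x).re : ℂ)))
        = (conj (bz x * φ x) * (g x : ℂ)) * (1 + (u x + conj (u x)) / 2) := by
          rw [← hre]; ring
      _ = G₀ x * u x * (1 + (u x + conj (u x)) / 2) := by rw [hGx]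
      _ = (1/2 : ℂ) * G₀ x * (1 + u x) ^ 2 := by linear_combination (G₀ x / 2) * hv
  have heq2 : ∀ᵐ x ∂m, conj (bz x * φ x) * ((g x : ℂ) * (1 - ((u x).re : ℂ))) =
      -(1/2 : ℂ) * G₀ x * (1 - u x) ^ 2 := by
    filter_upwards [hGdef, hfact, hu1] with x h1 h2 h3
    have hv : u x * conj (u x) = 1 := by
      rw [Complex.mul_conj]
      norm_cast
      rw [Complex.normSq_eq_norm_sq, h3, one_pow]
    have hre : ((u x).re : ℂ) = (u x + conj (u x)) / 2 := by
      rw [Complex.add_conj]; push_cast; ring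
    have hGx : conj (bz x * φ x) * (g x : ℂ) = G₀ x * u x := by rw [← h1, h2]
    calc conj (bz x * φ x) * ((g x : ℂ) * (1 - ((u x).re : ℂ)))
        = (conj (bz x * φ x) * (g x : ℂ)) * (1 - (u x + conj (u x)) / 2) := by
          rw [← hre]; ring
      _ = G₀ x * u x * (1 - (u x + conj (u x)) / 2) := by rw [hGx]
      _ = -(1/2 : ℂ) * G₀ x * (1 - u x) ^ 2 := by linear_combination (-(G₀ x) / 2) * hv
  have hVplus : ∀ w ∈ ball (0:ℂ) 1, ‖1 + U w‖ ≤ 2 := fun w hw => by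
    calc ‖1 + U w‖ ≤ ‖(1:ℂ)‖ + ‖U w‖ := norm_add_le _ _
      _ ≤ 1 + 1 := by rw [norm_one]; exact add_le_add_right (hUbd w hw) 1
      _ = 2 := by norm_num
  have hVminus : ∀ w ∈ ball (0:ℂ) 1, ‖1 - U w‖ ≤ 2 := fun w hw => by
    calc ‖1 - U w‖ ≤ ‖(1:ℂ)‖ + ‖U w‖ := norm_sub_le _ _
      _ ≤ 1 + 1 := by rw [norm_one]; exact add_le_add_right (hUbd w hw) 1
      _ = 2 := by norm_num
  refine ⟨heq1, heq2, ?_, ?_⟩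
  · refine ⟨fun ζ => (1/2 : ℂ) * F ζ * (1 + U ζ) ^ 2,
      HpDisk_mul_sq F _ _ hF ((differentiableOn_const 1).add hUdiff) hVplus, ?_⟩
    filter_upwards [hFG₀, hUu, heq1] with x hB hU' he
    rw [he]
    exact (tendsto_const_nhds.mul hB).mul ((tendsto_const_nhds.add hU').pow 2)
  · refine ⟨fun ζ => -(1/2 : ℂ) * F ζ * (1 - U ζ) ^ 2,
      HpDisk_mul_sq F _ _ hF ((differentiableOn_const 1).sub hUdiff) hVminus, ?_⟩
    filter_upwards [hFG₀, hUu, heq2] with x hB hU' he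
    rw [he]
    exact (tendsto_const_nhds.mul hB).mul ((tendsto_const_nhds.sub hU').pow 2)
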